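/- Let d, k ≥ 1 and let N_{i,j} be arbitrary k×k real matrices for i, j ∈ {1,…,d}. Let X be an element of the free ℝ-algebra on x_1,…,x_d with word-basis coordinates X^V, and let ψ be the unique ℝ-algebra homomorphism into k×k matrices with entries in ℝ[θ_1,…,θ_d] sending x_j to ∑_{i=1}^d θ_i · N_{i,j}. Let J = (j_1,…,j_L) be a word of length L. Then applying the iterated partial derivative ∂_{θ_{j_1}}⋯∂_{θ_{j_L}} entrywise to ψ(X) and evaluating all entries at θ = 0 yields C_J · ∑_{V = (v_1,…,v_L) a word of length L} X^V · ( ∑_{I = (i_1,…,i_L) a word that is a rearrangement of J} N_{i_1,v_1} • N_{i_2,v_2} • ⋯ • N_{i_L,v_L} ). -/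

import Mathlib

/-- `I` is a rearrangement of `J`: same length and same letter multiplicities. -/
def Rearr {d : ℕ} (I J : List (Fin d)) : Prop :=
  I.length = J.length ∧ ∀ i : Fin d, I.count i = J.count i

instance {d : ℕ} (I J : List (Fin d)) : Decidable (Rearr I J) := by
  unfold Rearr; infer_instance

/-- `C_J := ∏_{i=1}^d (r^J(i))!`. -/
def CW {d : ℕ} (J : List (Fin d)) : ℕ :=
  ∏ i : Fin d, Nat.factorial (J.count i)

/-- The word-basis coordinate `X^V` of an element `X` of the free `ℝ`-algebra on `d`
generators, at the word `V`. -/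
noncomputable def coords {d : ℕ} (X : FreeAlgebra ℝ (Fin d)) (V : List (Fin d)) : ℝ :=
  (FreeAlgebra.equivMonoidAlgebraFreeMonoid X : MonoidAlgebra ℝ (FreeMonoid (Fin d))).coeff
    (FreeMonoid.ofList V)

open MvPolynomial Finsupp

variable {d : ℕ}

/-- The count finsupp of a word. -/
noncomputable def cnt (J : List (Fin d)) : Fin d →₀ ℕ := (J : Multiset (Fin d)).toFinsupp

@[simp] lemma cnt_apply (J : List (Fin d)) (i : Fin d) : cnt J i = J.count i := by
  simp [cnt]

@[simp] lemma cnt_nil : cnt ([] : List (Fin d)) = 0 := by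
  ext i; simp

lemma cnt_cons (j : Fin d) (J : List (Fin d)) :
    cnt (j :: J) = cnt J + Finsupp.single j 1 := by
  ext i
  rcases eq_or_ne i j with rfl | h
  · simp [List.count_cons]
  · simp [List.count_cons, Finsupp.single_apply, h, Ne.symm h]

lemma foldr_pderiv_monomial (J : List (Fin d)) (α : Fin d →₀ ℕ) (c : ℝ) :
    J.foldr (fun j q => MvPolynomial.pderiv j q) (monomial α c) =
      monomial (α - cnt J) (c * ∏ i, (Nat.descFactorial (α i) (J.count i) : ℝ)) := by
  induction J with
  | nil => simp
  | cons j J' ih =>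
    rw [List.foldr_cons, ih, pderiv_monomial]
    congr 1
    · rw [cnt_cons, tsub_add_eq_tsub_tsub]
    · rw [Finsupp.tsub_apply, cnt_apply]
      have hsplit : ∀ (g : Fin d → ℝ), ∏ i, g i = g j * ∏ i ∈ Finset.univ.erase j, g i := by
        intro g; rw [Finset.mul_prod_erase _ _ (Finset.mem_univ j)]
      rw [hsplit (fun i => (Nat.descFactorial (α i) ((j :: J').count i) : ℝ)),
          hsplit (fun i => (Nat.descFactorial (α i) (J'.count i) : ℝ))]
      have h1 : ∏ i ∈ Finset.univ.erase j, (Nat.descFactorial (α i) ((j :: J').count i) : ℝ)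
          = ∏ i ∈ Finset.univ.erase j, (Nat.descFactorial (α i) (J'.count i) : ℝ) := by
        refine Finset.prod_congr rfl fun i hi => ?_
        rw [List.count_cons]
        simp [Ne.symm (Finset.mem_erase.mp hi).1]
      have h2 : (j :: J').count j = J'.count j + 1 := by simp [List.count_cons]
      rw [h1, h2, Nat.descFactorial_succ]
      push_cast
      ring

lemma eval_zero_monomial (β : Fin d →₀ ℕ) (r : ℝ) :
    MvPolynomial.eval (0 : Fin d → ℝ) (monomial β r) = if β = 0 then r else 0 := by
  rw [eval_monomial]
  rcases eq_or_ne β 0 with rfl | h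
  · simp
  · rw [if_neg h]
    obtain ⟨i, hi⟩ : ∃ i, β i ≠ 0 := by
      by_contra hc; push_neg at hc; exact h (Finsupp.ext fun i => hc i)
    rw [Finsupp.prod]
    have : (0 : Fin d → ℝ) i ^ β i = 0 := by
      simp [zero_pow hi]
    rw [Finset.prod_eq_zero (Finsupp.mem_support_iff.mpr hi) this, mul_zero]

lemma eval_zero_foldr_pderiv (J : List (Fin d)) (α : Fin d →₀ ℕ) (c : ℝ) :
    MvPolynomial.eval (0 : Fin d → ℝ)
        (J.foldr (fun j q => MvPolynomial.pderiv j q) (monomial α c)) =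
      if α = cnt J then (CW J : ℝ) * c else 0 := by
  rw [foldr_pderiv_monomial, eval_zero_monomial]
  rcases eq_or_ne α (cnt J) with rfl | h
  · rw [if_pos (by simp), if_pos rfl]
    have : ∀ i : Fin d, (Nat.descFactorial (cnt J i) (J.count i) : ℝ)
        = (Nat.factorial (J.count i) : ℝ) := by
      intro i; rw [cnt_apply, Nat.descFactorial_self]
    simp only [this, CW]
    push_cast
    ring
  · rw [if_neg h]
    rcases eq_or_ne (α - cnt J) 0 with h0 | h0
    · rw [if_pos h0]
      have hle : α ≤ cnt J := tsub_eq_zero_iff_le.mp h0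
      obtain ⟨i, hi⟩ : ∃ i, α i < cnt J i := by
        by_contra hc; push_neg at hc
        exact h (le_antisymm hle (fun i => hc i))
      have : (Nat.descFactorial (α i) (J.count i) : ℝ) = 0 := by
        rw [← cnt_apply] at *
        norm_cast
        exact Nat.descFactorial_eq_zero_iff_lt.mpr hi
      rw [Finset.prod_eq_zero (Finset.mem_univ i) this, mul_zero]
    · rw [if_neg h0]

lemma prod_X_eq_monomial (m : ℕ) (I : Fin m → Fin d) :
    (∏ ℓ : Fin m, (X (I ℓ) : MvPolynomial (Fin d) ℝ)) =
      monomial (cnt (List.ofFn I)) 1 := by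
  induction m with
  | zero => simp [List.ofFn_zero]
  | succ m ih =>
    rw [Fin.prod_univ_succ, ih (fun ℓ => I ℓ.succ), List.ofFn_succ, cnt_cons,
      X, monomial_mul]
    rw [add_comm, one_mul]

lemma equiv_listProd (l : List (Fin d)) :
    FreeAlgebra.equivMonoidAlgebraFreeMonoid ((l.map (FreeAlgebra.ι ℝ)).prod) =
      MonoidAlgebra.single (FreeMonoid.ofList l) (1 : ℝ) := by
  induction l with
  | nil => simp [MonoidAlgebra.one_def]
  | cons j l ih =>
    rw [List.map_cons, List.prod_cons, map_mul, ih]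
    have hj : FreeAlgebra.equivMonoidAlgebraFreeMonoid (FreeAlgebra.ι ℝ j) =
        MonoidAlgebra.single (FreeMonoid.of j) (1 : ℝ) := by
      simp [FreeAlgebra.equivMonoidAlgebraFreeMonoid]
    rw [hj, MonoidAlgebra.single_mul_single, one_mul]
    rfl

lemma matrix_prod_expand (k : ℕ) (N : Fin d → Fin d → Matrix (Fin k) (Fin k) ℝ)
    (m : ℕ) (W : Fin m → Fin d) :
    (List.ofFn fun ℓ : Fin m =>
        ∑ i : Fin d, (X i : MvPolynomial (Fin d) ℝ) •
          (N i (W ℓ)).map (C : ℝ → MvPolynomial (Fin d) ℝ)).prod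
    = ∑ I : Fin m → Fin d,
        monomial (cnt (List.ofFn I)) (1 : ℝ) •
          ((List.ofFn fun ℓ => N (I ℓ) (W ℓ)).prod).map (C : ℝ → MvPolynomial (Fin d) ℝ) := by
  induction m with
  | zero =>
    rw [List.ofFn_zero, List.prod_nil, Fintype.sum_unique]
    simp
    exact (Matrix.map_one _ (map_zero _) (map_one _)).symm
  | succ m ih =>
    rw [List.ofFn_succ, List.prod_cons, ih (fun ℓ => W ℓ.succ), Finset.sum_mul_sum]
    rw [← Equiv.sum_comp (Fin.consEquiv (fun _ : Fin (m+1) => Fin d)), Fintype.sum_prod_type]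
    refine Finset.sum_congr rfl fun i _ => Finset.sum_congr rfl fun I' _ => ?_
    rw [smul_mul_smul_comm]
    congr 1
    · rw [X, monomial_mul, one_mul]
      congr 1
      simp [Fin.consEquiv, List.ofFn_succ, cnt_cons, add_comm]
    · rw [← Matrix.map_mul]
      congr 1
      simp [Fin.consEquiv, List.ofFn_succ]

lemma cnt_sum_eq_length (L : List (Fin d)) : ∑ i, cnt L i = L.length := by
  induction L with
  | nil => simp
  | cons j L ih =>
    simp only [cnt_apply, List.count_cons] at *
    rw [Finset.sum_add_distrib, ih]
    simp [List.length_cons]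

lemma length_eq_of_cnt_eq {L₁ L₂ : List (Fin d)} (h : cnt L₁ = cnt L₂) :
    L₁.length = L₂.length := by
  rw [← cnt_sum_eq_length, ← cnt_sum_eq_length, h]

lemma foldr_pderiv_add (J : List (Fin d)) (p q : MvPolynomial (Fin d) ℝ) :
    J.foldr (fun j r => MvPolynomial.pderiv j r) (p + q) =
      J.foldr (fun j r => MvPolynomial.pderiv j r) p +
        J.foldr (fun j r => MvPolynomial.pderiv j r) q := by
  induction J with
  | nil => simp
  | cons j J ih => simp [ih]

lemma foldr_pderiv_smul (J : List (Fin d)) (c : ℝ) (p : MvPolynomial (Fin d) ℝ) :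
    J.foldr (fun j r => MvPolynomial.pderiv j r) (c • p) =
      c • J.foldr (fun j r => MvPolynomial.pderiv j r) p := by
  induction J with
  | nil => simp
  | cons j J ih => simp [ih]

noncomputable def Fmap (J : List (Fin d)) : MvPolynomial (Fin d) ℝ →ₗ[ℝ] ℝ where
  toFun p := MvPolynomial.eval (0 : Fin d → ℝ) (J.foldr (fun j q => MvPolynomial.pderiv j q) p)
  map_add' p q := by rw [foldr_pderiv_add, map_add]
  map_smul' c p := by
    rw [foldr_pderiv_smul, MvPolynomial.smul_eq_C_mul, map_mul, MvPolynomial.eval_C]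
    rfl

noncomputable def matMap (k : ℕ) (J : List (Fin d)) :
    Matrix (Fin k) (Fin k) (MvPolynomial (Fin d) ℝ) →ₗ[ℝ] Matrix (Fin k) (Fin k) ℝ where
  toFun M := M.map (Fmap J)
  map_add' A B := by
    ext a b; simp [Matrix.map_apply, Matrix.add_apply]
  map_smul' c A := by
    ext a b; simp [Matrix.map_apply, Matrix.smul_apply]

lemma matMap_term (k : ℕ) (J : List (Fin d)) (e : Fin d →₀ ℕ) (A : Matrix (Fin k) (Fin k) ℝ) :
    matMap k J (monomial e (1 : ℝ) • A.map (C : ℝ → MvPolynomial (Fin d) ℝ)) =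
      (if e = cnt J then (CW J : ℝ) else 0) • A := by
  ext a b
  simp only [matMap, LinearMap.coe_mk, AddHom.coe_mk, Matrix.map_apply, Matrix.smul_apply,
    Fmap, Matrix.smul_apply, smul_eq_mul]
  have h1 : (monomial e (1:ℝ)) * C (A a b) = monomial e (A a b) := by
    rw [C_apply, monomial_mul, add_zero, one_mul]
  rw [h1, eval_zero_foldr_pderiv]
  split <;> simp

noncomputable def coordsLin (V : List (Fin d)) : FreeAlgebra ℝ (Fin d) →ₗ[ℝ] ℝ where
  toFun X := (FreeAlgebra.equivMonoidAlgebraFreeMonoid X :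
      MonoidAlgebra ℝ (FreeMonoid (Fin d))).coeff (FreeMonoid.ofList V)
  map_add' X Y := by rw [map_add]; rfl
  map_smul' c X := by rw [map_smul]; rfl

lemma basis_eq_listProd (W : FreeMonoid (Fin d)) :
    FreeAlgebra.basisFreeMonoid ℝ (Fin d) W =
      ((FreeMonoid.toList W).map (FreeAlgebra.ι ℝ)).prod := by
  apply (FreeAlgebra.equivMonoidAlgebraFreeMonoid (R := ℝ) (X := Fin d)).injective
  rw [equiv_listProd, FreeAlgebra.basisFreeMonoid, Module.Basis.map_apply]
  simp only [Finsupp.basisSingleOne, Module.Basis.coe_ofRepr, LinearEquiv.refl_symm,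
    LinearEquiv.refl_apply, AlgEquiv.toLinearEquiv_apply, FreeMonoid.ofList_toList]
  exact AlgEquiv.apply_symm_apply _ _

lemma coords_basis (W : FreeMonoid (Fin d)) (V : List (Fin d)) :
    coordsLin V (FreeAlgebra.basisFreeMonoid ℝ (Fin d) W) =
      if V = FreeMonoid.toList W then 1 else 0 := by
  have h : FreeAlgebra.equivMonoidAlgebraFreeMonoid
      (FreeAlgebra.basisFreeMonoid ℝ (Fin d) W) =
        MonoidAlgebra.single W (1 : ℝ) := by
    rw [basis_eq_listProd, equiv_listProd, FreeMonoid.ofList_toList]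
  classical
  simp only [coordsLin, LinearMap.coe_mk, AddHom.coe_mk, h]
  rw [MonoidAlgebra.single_apply]
  by_cases hv : V = FreeMonoid.toList W
  · have hw : W = FreeMonoid.ofList V := by rw [hv, FreeMonoid.ofList_toList]
    rw [if_pos hw, if_pos hv]
  · have hw : ¬ W = FreeMonoid.ofList V :=
      fun hc => hv (by rw [hc, FreeMonoid.toList_ofList])
    rw [if_neg hw, if_neg hv]

lemma rearr_iff_cnt (K J : List (Fin d)) : Rearr K J ↔ cnt K = cnt J := by
  constructor
  · intro h; ext i; simpa using h.2 i
  · intro h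
    exact ⟨length_eq_of_cnt_eq h, fun i => by simpa using Finsupp.ext_iff.mp h i⟩

lemma key_basis (d k : ℕ) (N : Fin d → Fin d → Matrix (Fin k) (Fin k) ℝ)
    (J : List (Fin d)) (W : FreeMonoid (Fin d)) :
    (matMap k J) ((FreeAlgebra.lift ℝ
        (fun j : Fin d =>
          ∑ i : Fin d,
            (MvPolynomial.X i : MvPolynomial (Fin d) ℝ) • (N i j).map MvPolynomial.C))
      (FreeAlgebra.basisFreeMonoid ℝ (Fin d) W)) =
    (CW J : ℝ) • ∑ V : Fin J.length → Fin d,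
      coordsLin (List.ofFn V) (FreeAlgebra.basisFreeMonoid ℝ (Fin d) W) •
        ∑ I : Fin J.length → Fin d,
          if Rearr (List.ofFn I) J then
            (List.ofFn fun ℓ : Fin J.length => N (I ℓ) (V ℓ)).prod
          else 0 := by
  classical
  simp only [coords_basis]
  rw [basis_eq_listProd, map_list_prod, List.map_map]
  have hψι : ((FreeAlgebra.lift ℝ
      (fun j : Fin d =>
        ∑ i : Fin d,
          (MvPolynomial.X i : MvPolynomial (Fin d) ℝ) • (N i j).map MvPolynomial.C) :
        FreeAlgebra ℝ (Fin d) →ₐ[ℝ] Matrix (Fin k) (Fin k) (MvPolynomial (Fin d) ℝ))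
      ∘ FreeAlgebra.ι ℝ) =
      fun w => ∑ i : Fin d, (MvPolynomial.X i : MvPolynomial (Fin d) ℝ) •
        (N i w).map MvPolynomial.C :=
    funext fun w => FreeAlgebra.lift_ι_apply _ _
  rw [hψι]
  generalize FreeMonoid.toList W = l
  conv_lhs => rw [← List.ofFn_get l, List.map_ofFn]
  simp only [Function.comp_def]
  rw [matrix_prod_expand k N l.length l.get, map_sum]
  simp only [matMap_term]
  by_cases hm : l.length = J.length
  · obtain ⟨V₀, rfl⟩ : ∃ V₀ : Fin J.length → Fin d, List.ofFn V₀ = l := by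
      refine ⟨fun ℓ => l.get (Fin.cast hm.symm ℓ), ?_⟩
      apply List.ext_get (by simp [hm])
      intro n h1 h2
      rw [List.get_ofFn]
      rfl
    -- collapse the V-sum
    have hsum : (∑ V : Fin J.length → Fin d,
        (if List.ofFn V = List.ofFn V₀ then (1:ℝ) else 0) •
          ∑ I : Fin J.length → Fin d,
            (if Rearr (List.ofFn I) J then
              (List.ofFn fun ℓ => N (I ℓ) (V ℓ)).prod else 0)) =
        ∑ I : Fin J.length → Fin d,
            (if Rearr (List.ofFn I) J then
              (List.ofFn fun ℓ => N (I ℓ) (V₀ ℓ)).prod else 0) := by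
      rw [Finset.sum_eq_single V₀]
      · rw [if_pos rfl, one_smul]
      · intro V _ hne
        rw [if_neg (fun hc => hne (List.ofFn_inj.mp hc)), zero_smul]
      · intro h; exact absurd (Finset.mem_univ V₀) h
    rw [hsum]
    -- reindex the I-sum
    rw [← Equiv.sum_comp (Equiv.arrowCongr (finCongr hm) (Equiv.refl (Fin d))).symm
      (fun I : Fin (List.ofFn V₀).length → Fin d =>
        (if cnt (List.ofFn I) = cnt J then (CW J : ℝ) else 0) •
          (List.ofFn fun ℓ => N (I ℓ) ((List.ofFn V₀).get ℓ)).prod)]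
    rw [Finset.smul_sum]
    refine Finset.sum_congr rfl fun I' _ => ?_
    have e1 : (List.ofFn fun ℓ : Fin (List.ofFn V₀).length =>
        ((Equiv.arrowCongr (finCongr hm) (Equiv.refl (Fin d))).symm I') ℓ) =
        List.ofFn I' := by
      rw [List.ofFn_congr hm]
      refine congrArg _ (funext fun i => ?_)
      simp [Equiv.arrowCongr, finCongr, Fin.ext_iff]
    have e2 : (List.ofFn fun ℓ : Fin (List.ofFn V₀).length =>
        N (((Equiv.arrowCongr (finCongr hm) (Equiv.refl (Fin d))).symm I') ℓ)
          ((List.ofFn V₀).get ℓ)) =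
        List.ofFn fun i : Fin J.length => N (I' i) (V₀ i) := by
      rw [List.ofFn_congr hm]
      refine congrArg _ (funext fun i => ?_)
      rw [List.get_ofFn]
      simp [Equiv.arrowCongr, finCongr, Fin.ext_iff]
    rw [e1, e2]
    by_cases hr : Rearr (List.ofFn I') J
    · rw [if_pos hr, if_pos ((rearr_iff_cnt _ _).mp hr)]
    · rw [if_neg hr, if_neg (fun hc => hr ((rearr_iff_cnt _ _).mpr hc)), zero_smul, smul_zero]
  · trans (0 : Matrix (Fin k) (Fin k) ℝ)
    · exact Finset.sum_eq_zero fun I _ => by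
        rw [if_neg (fun hc => hm (by simpa using length_eq_of_cnt_eq hc)), zero_smul]
    · symm
      calc (CW J : ℝ) • ∑ V : Fin J.length → Fin d,
            (if List.ofFn V = l then (1:ℝ) else 0) •
              ∑ I : Fin J.length → Fin d,
                (if Rearr (List.ofFn I) J then
                  (List.ofFn fun ℓ => N (I ℓ) (V ℓ)).prod else 0)
          = (CW J : ℝ) • (0 : Matrix (Fin k) (Fin k) ℝ) := by
            congr 1
            exact Finset.sum_eq_zero fun V _ => by
              rw [if_neg (fun hc => hm (by rw [← hc, List.length_ofFn])), zero_smul]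
        _ = 0 := smul_zero _

/-- for arbitrary `k × k` real matrices `N i j`, letting `ψ` send `x_j` to
`∑_i θ_i • N i j`, applying `∂_{θ_{j_1}} ⋯ ∂_{θ_{j_L}}` entrywise to `ψ(X)` and evaluating at
`θ = 0` yields `C_J • ∑_{V of length L} X^V • ∑_{I rearrangement of J} N_{i_1,v_1} ⬝ ⋯ ⬝ N_{i_L,v_L}`
(length-`L` words are encoded as functions `Fin L → Fin d`). -/

theorem stmt6 (d k : ℕ) (hd : 0 < d) (hk : 0 < k)
    (N : Fin d → Fin d → Matrix (Fin k) (Fin k) ℝ)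
    (X : FreeAlgebra ℝ (Fin d)) (J : List (Fin d)) :
    (FreeAlgebra.lift ℝ
          (fun j : Fin d =>
            ∑ i : Fin d,
              (MvPolynomial.X i : MvPolynomial (Fin d) ℝ) • (N i j).map MvPolynomial.C) X).map
        (fun p => MvPolynomial.eval (0 : Fin d → ℝ)
          (J.foldr (fun j q => MvPolynomial.pderiv j q) p)) =
      (CW J : ℝ) •
        ∑ V : Fin J.length → Fin d,
          coords X (List.ofFn V) •
            ∑ I : Fin J.length → Fin d,
              if Rearr (List.ofFn I) J then
                (List.ofFn fun ℓ : Fin J.length => N (I ℓ) (V ℓ)).prod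
              else 0 := by
  classical
  let S : (Fin J.length → Fin d) → Matrix (Fin k) (Fin k) ℝ := fun V =>
    ∑ I : Fin J.length → Fin d,
      if Rearr (List.ofFn I) J then
        (List.ofFn fun ℓ : Fin J.length => N (I ℓ) (V ℓ)).prod
      else 0
  let lhsL : FreeAlgebra ℝ (Fin d) →ₗ[ℝ] Matrix (Fin k) (Fin k) ℝ :=
    (matMap k J) ∘ₗ (FreeAlgebra.lift ℝ
      (fun j : Fin d =>
        ∑ i : Fin d,
          (MvPolynomial.X i : MvPolynomial (Fin d) ℝ) •
            (N i j).map MvPolynomial.C)).toLinearMap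
  let rhsL : FreeAlgebra ℝ (Fin d) →ₗ[ℝ] Matrix (Fin k) (Fin k) ℝ :=
    (CW J : ℝ) • ∑ V : Fin J.length → Fin d, (coordsLin (List.ofFn V)).smulRight (S V)
  have key : lhsL = rhsL := by
    apply Module.Basis.ext (FreeAlgebra.basisFreeMonoid ℝ (Fin d))
    intro W
    have h := key_basis d k N J W
    simp only [lhsL, rhsL, S, LinearMap.comp_apply, AlgHom.toLinearMap_apply,
      LinearMap.smul_apply, LinearMap.sum_apply, LinearMap.smulRight_apply]
    exact h
  have hx := LinearMap.congr_fun key X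
  have h1 : (FreeAlgebra.lift ℝ
          (fun j : Fin d =>
            ∑ i : Fin d,
              (MvPolynomial.X i : MvPolynomial (Fin d) ℝ) • (N i j).map MvPolynomial.C) X).map
        (fun p => MvPolynomial.eval (0 : Fin d → ℝ)
          (J.foldr (fun j q => MvPolynomial.pderiv j q) p)) = lhsL X := rfl
  have h2 : rhsL X = (CW J : ℝ) •
        ∑ V : Fin J.length → Fin d, coords X (List.ofFn V) • S V := by
    simp only [rhsL, LinearMap.smul_apply, LinearMap.sum_apply, LinearMap.smulRight_apply]
    rfl
  rw [h1, hx, h2]
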